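/- arXiv:1901.04036 — 3 statements merged into one kernel-verified Lean document; each statement's English description precedes it below -/
import Mathlib

section
/- Let l, w be positive integers and i ∈ {1,2}, and let h(p) = h^{(i)}_{l,w}(p) be the reliability polynomial of the hammock network H^{(i)}_{l,w}, viewed as a real polynomial function. Then the k-th derivative of h vanishes at 0 for every k = 0, 1, …, l−1. -/
open scoped Classical

/-- Parity predicate: kind 1 = even points (x+y even), kind 2 = odd points. -/
def HammockPar (i : ℕ) (p : ℤ × ℤ) : Prop :=
  if i = 1 then Even (p.1 + p.2) else Odd (p.1 + p.2)

/-- The set 𝒱_{l,w} of lattice points of the rectangle [0,l] × [0,w]. -/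
def HammockVAll (l w : ℕ) : Set (ℤ × ℤ) :=
  {p | 0 ≤ p.1 ∧ p.1 ≤ (l : ℤ) ∧ 0 ≤ p.2 ∧ p.2 ≤ (w : ℤ)}

/-- The vertex set V^{(i)}_{l,w} of the hammock network of kind `i`. -/
def HammockV (i l w : ℕ) : Set (ℤ × ℤ) :=
  {p | p ∈ HammockVAll l w ∧ HammockPar i p}

/-- The set 𝓔_{l,w} of all diagonal unit edges inside the rectangle. -/
def HammockEAll (l w : ℕ) : Set (Sym2 (ℤ × ℤ)) :=
  {e | ∃ a b : ℤ × ℤ, e = s(a, b) ∧ a ∈ HammockVAll l w ∧ b ∈ HammockVAll l w ∧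
      |a.1 - b.1| = 1 ∧ |a.2 - b.2| = 1}

/-- The edge set E^{(i)}_{l,w} of the hammock network of kind `i`. -/
def HammockE (i l w : ℕ) : Set (Sym2 (ℤ × ℤ)) :=
  {e | e ∈ HammockEAll l w ∧ ∀ p ∈ e, HammockPar i p}

/-- The allowed steps of an X-path. -/
def XStep : Set (ℤ × ℤ) := {(1, 1), (-1, 1), (1, -1), (-1, -1)}

/-- An X-path: a finite sequence of pairwise distinct lattice points, each obtained
from the previous one by a step in `XStep`. -/
def IsXPath (vs : List (ℤ × ℤ)) : Prop :=
  vs.Nodup ∧ vs.Chain' (fun a b => b - a ∈ XStep)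

/-- The list of edges of an X-path. -/
def xEdges (vs : List (ℤ × ℤ)) : List (Sym2 (ℤ × ℤ)) :=
  (vs.zip vs.tail).map fun q => s(q.1, q.2)

/-- A two-terminal network on the diagonal lattice: an edge set together with
a set of source nodes and a set of terminus nodes. -/
structure HNetwork where
  edges : Set (Sym2 (ℤ × ℤ))
  src : Set (ℤ × ℤ)
  tgt : Set (ℤ × ℤ)

/-- `P` is a pathset: `P ⊆ edges` and `P` contains all edges of some X-path
joining a source node to a terminus node. -/
def HNetwork.IsPathset (N : HNetwork) (P : Set (Sym2 (ℤ × ℤ))) : Prop :=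
  P ⊆ N.edges ∧ ∃ (vs : List (ℤ × ℤ)) (h : vs ≠ []),
    IsXPath vs ∧ vs.head h ∈ N.src ∧ vs.getLast h ∈ N.tgt ∧ ∀ e ∈ xEdges vs, e ∈ P

/-- `C` is a cutset: removing `C` leaves no pathset. -/
def HNetwork.IsCutset (N : HNetwork) (C : Set (Sym2 (ℤ × ℤ))) : Prop :=
  C ⊆ N.edges ∧ ¬ N.IsPathset (N.edges \ C)

/-- A minpath: a pathset no proper subset of which is a pathset. -/
def HNetwork.IsMinpath (N : HNetwork) (P : Set (Sym2 (ℤ × ℤ))) : Prop :=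
  N.IsPathset P ∧ ∀ Q, Q ⊂ P → ¬ N.IsPathset Q

/-- A mincut: a cutset no proper subset of which is a cutset. -/
def HNetwork.IsMincut (N : HNetwork) (C : Set (Sym2 (ℤ × ℤ))) : Prop :=
  N.IsCutset C ∧ ∀ D, D ⊂ C → ¬ N.IsCutset D

/-- The hammock network H^{(i)}_{l,w}: sources are its vertices with x = 0,
terminals its vertices with x = l. -/
def hammock (i l w : ℕ) : HNetwork where
  edges := HammockE i l w
  src := {p | p ∈ HammockV i l w ∧ p.1 = 0}
  tgt := {p | p ∈ HammockV i l w ∧ p.1 = (l : ℤ)}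

/-- The dual network H̄^{(i)}_{l,w}: vertex set 𝒱 − V^{(i)}, edge set 𝓔 − E^{(i)},
sources the points with y = 0, terminals the points with y = w. -/
def hammockDual (i l w : ℕ) : HNetwork where
  edges := HammockEAll l w \ HammockE i l w
  src := {p | p ∈ HammockVAll l w \ HammockV i l w ∧ p.2 = 0}
  tgt := {p | p ∈ HammockVAll l w \ HammockV i l w ∧ p.2 = (w : ℤ)}

/-- The complementary edge: ē of e = {(x,y),(x+1,y±1)} is {(x+1,y),(x,y±1)}. -/
def complEdge : Sym2 (ℤ × ℤ) → Sym2 (ℤ × ℤ) :=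
  Sym2.lift ⟨fun a b => s((a.1, b.2), (b.1, a.2)), fun _ _ => Sym2.eq_swap⟩

/-- The other kind: 2/1 = 2 and 2/2 = 1. -/
def otherKind (i : ℕ) : ℕ := if i = 1 then 2 else 1

/-- The edge set E^{(i)}_{l,w} as a finite set. -/
noncomputable def hammockEFinset (i l w : ℕ) : Finset (Sym2 (ℤ × ℤ)) :=
  ((Finset.Icc (0 : ℤ) l) ×ˢ (Finset.Icc (0 : ℤ) w)).sym2.filter (· ∈ HammockE i l w)

/-- The reliability polynomial h^{(i)}_{l,w}(p) = Σ_P p^{|P|} (1-p)^{lw-|P|},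
summing over all pathsets P of H^{(i)}_{l,w}. -/
noncomputable def hammockRel (i l w : ℕ) (p : ℝ) : ℝ :=
  ∑ P ∈ (hammockEFinset i l w).powerset.filter (fun P : Finset (Sym2 (ℤ × ℤ)) => (hammock i l w).IsPathset ↑P),
    p ^ P.card * (1 - p) ^ (l * w - P.card)

lemma polyIteratedDeriv (k : ℕ) (p : Polynomial ℝ) :
    iteratedDeriv k (fun x => p.eval x) = fun x => (Polynomial.derivative^[k] p).eval x := by
  induction k generalizing p with
  | zero => simp
  | succ n ih =>
    rw [iteratedDeriv_succ']
    have h : deriv (fun x => p.eval x) = fun x => p.derivative.eval x :=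
      funext fun x => Polynomial.deriv p
    rw [h, ih, Function.iterate_succ_apply]

lemma xstep_abs {a b : ℤ × ℤ} (h : b - a ∈ XStep) : b.1 - a.1 ≤ 1 := by
  simp only [XStep, Set.mem_insert_iff, Set.mem_singleton_iff, Prod.ext_iff,
    Prod.fst_sub, Prod.snd_sub] at h
  omega

lemma xpath_x_bound : ∀ (vs : List (ℤ × ℤ)) (h : vs ≠ []),
    vs.Chain' (fun a b => b - a ∈ XStep) →
    (vs.getLast h).1 - (vs.head h).1 ≤ (vs.length : ℤ) - 1 := by
  intro vs
  induction vs with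
  | nil => intro h; exact absurd rfl h
  | cons a t ih =>
    intro h hc
    cases t with
    | nil => simp
    | cons b t' =>
      rcases List.isChain_cons_cons.mp hc with ⟨hab, hc'⟩
      have h2 : (b :: t') ≠ [] := by simp
      have := ih h2 hc'
      have hgl : (a :: b :: t').getLast h = (b :: t').getLast h2 :=
        List.getLast_cons h2
      rw [hgl]
      have hstep := xstep_abs hab
      simp only [List.head_cons, List.length_cons] at *
      push_cast
      omega

lemma xedges_mem (vs : List (ℤ × ℤ)) (j : ℕ) (hj : j + 1 < vs.length) :
    s(vs[j], vs[j+1]) ∈ xEdges vs := by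
  have hlen : (vs.zip vs.tail).length = vs.length - 1 := by
    simp [List.length_zip, List.length_tail]
  have hjz : j < (vs.zip vs.tail).length := by omega
  have hz : (vs.zip vs.tail)[j] = (vs[j]'(by omega), vs.tail[j]'(by simp [List.length_tail]; omega)) :=
    List.getElem_zip ..
  have ht : vs.tail[j]'(by simp [List.length_tail]; omega) = vs[j+1] := by
    rw [List.getElem_tail]
  unfold xEdges
  refine List.mem_map.mpr ⟨(vs[j], vs[j+1]), ?_, rfl⟩
  rw [← ht, ← hz]
  exact List.getElem_mem hjz

lemma pathset_card_le (i l w : ℕ) (P : Finset (Sym2 (ℤ × ℤ)))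
    (hP : (hammock i l w).IsPathset ↑P) : l ≤ P.card := by
  obtain ⟨-, vs, hne, ⟨hnd, hch⟩, hsrc, htgt, hmem⟩ := hP
  have hx0 : (vs.head hne).1 = 0 := hsrc.2
  have hxl : (vs.getLast hne).1 = (l : ℤ) := htgt.2
  have hlen : l ≤ vs.length - 1 := by
    have := xpath_x_bound vs hne hch
    rw [hxl, hx0] at this
    have h1 : 1 ≤ vs.length := List.length_pos_iff.mpr hne
    omega
  have h1len : 1 ≤ vs.length := List.length_pos_iff.mpr hne
  have hgd : ∀ j, ∀ hj : j + 1 < vs.length,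
      (s(vs.getD j (0,0), vs.getD (j+1) (0,0)) : Sym2 (ℤ × ℤ)) =
        s(vs[j]'(by omega), vs[j+1]'hj) := by
    intro j hj
    rw [List.getD_eq_getElem _ _ (by omega), List.getD_eq_getElem _ _ hj]
  have : (Finset.range (vs.length - 1)).card ≤ P.card := by
    apply Finset.card_le_card_of_injOn
      (fun j => (s(vs.getD j (0,0), vs.getD (j+1) (0,0)) : Sym2 (ℤ × ℤ)))
    · intro j hj
      simp only [Finset.mem_coe, Finset.mem_range] at hj
      beta_reduce
      rw [hgd j (by omega)]
      exact hmem _ (xedges_mem vs j (by omega))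
    · intro a ha b hb hab
      simp only [Finset.coe_range, Set.mem_Iio] at ha hb
      simp only at hab
      rw [hgd a (by omega), hgd b (by omega)] at hab
      rcases Sym2.eq_iff.mp hab with ⟨h1, h2⟩ | ⟨h1, h2⟩
      · exact hnd.getElem_inj_iff.mp h1
      · have e1 : a = b + 1 := hnd.getElem_inj_iff.mp h1
        have e2 : a + 1 = b := hnd.getElem_inj_iff.mp h2
        omega
  simpa using le_trans hlen (by simpa using this)

/-- The k-th derivative of h = h^{(i)}_{l,w} vanishes at 0
for every k = 0, 1, …, l−1. -/
theorem hammockRel_iteratedDeriv_zero (l w : ℕ) (hl : 0 < l) (hw : 0 < w)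
    (i : ℕ) (hi : i = 1 ∨ i = 2) (k : ℕ) (hk : k < l) :
    iteratedDeriv k (hammockRel i l w) 0 = 0 := by
  classical
  set S := (hammockEFinset i l w).powerset.filter
    (fun P : Finset (Sym2 (ℤ × ℤ)) => (hammock i l w).IsPathset ↑P) with hS
  set Q : Polynomial ℝ :=
    ∑ P ∈ S, Polynomial.X ^ P.card * (1 - Polynomial.X) ^ (l * w - P.card) with hQ
  have hfun : hammockRel i l w = fun x => Q.eval x := by
    funext x
    simp [hammockRel, hQ, hS, Polynomial.eval_finset_sum]
  have hcoeff : ∀ m < l, Q.coeff m = 0 := by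
    intro m hm
    rw [hQ, Polynomial.finset_sum_coeff]
    refine Finset.sum_eq_zero fun P hP => ?_
    have hPl : l ≤ P.card := pathset_card_le i l w P (Finset.mem_filter.mp hP).2
    have hdvd : (Polynomial.X : Polynomial ℝ) ^ l ∣
        Polynomial.X ^ P.card * (1 - Polynomial.X) ^ (l * w - P.card) :=
      dvd_mul_of_dvd_left (pow_dvd_pow _ hPl) _
    exact Polynomial.X_pow_dvd_iff.mp hdvd m hm
  rw [hfun, polyIteratedDeriv]
  show Polynomial.eval 0 ((⇑Polynomial.derivative)^[k] Q) = 0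
  rw [← Polynomial.coeff_zero_eq_eval_zero, Polynomial.coeff_iterate_derivative,
    zero_add, hcoeff k (by omega), smul_zero]
end

section
/- Let l, w be positive integers and i ∈ {1,2}, and let h(p) = h^{(i)}_{l,w}(p) be the reliability polynomial of the hammock network H^{(i)}_{l,w}, viewed as a real polynomial function. Then h(1) = 1 and the k-th derivative of h vanishes at 1 for every k = 1, 2, …, w−1. -/
open scoped Classical

lemma hammockPar_succ_left (i : ℕ) (x y : ℤ) :
    HammockPar i (x + 1, y) ↔ ¬ HammockPar i (x, y) := by
  unfold HammockPar
  simp only [Int.even_iff, Int.odd_iff]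
  split <;> omega

lemma hammockPar_succ_right (i : ℕ) (x y : ℤ) :
    HammockPar i (x, y + 1) ↔ ¬ HammockPar i (x, y) := by
  unfold HammockPar
  simp only [Int.even_iff, Int.odd_iff]
  split <;> omega

noncomputable def stripY (i : ℕ) (s x : ℤ) : ℤ :=
  if HammockPar i (x, s) then s else s + 1

lemma stripY_par (i : ℕ) (s x : ℤ) : HammockPar i (x, stripY i s x) := by
  unfold stripY
  split
  next h => exact h
  next h => exact (hammockPar_succ_right i x s).2 h

lemma stripY_bounds (i : ℕ) (s x : ℤ) : s ≤ stripY i s x ∧ stripY i s x ≤ s + 1 := by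
  unfold stripY; split <;> omega

lemma stripY_cases (i : ℕ) (s x : ℤ) :
    (stripY i s x = s ∧ stripY i s (x + 1) = s + 1) ∨
    (stripY i s x = s + 1 ∧ stripY i s (x + 1) = s) := by
  unfold stripY
  by_cases h : HammockPar i (x, s)
  · left; simp [h, hammockPar_succ_left]
  · right; simp [h, hammockPar_succ_left]

/-- The unique edge of kind `i` in column `x`, strip `s`. -/
noncomputable def stripEdge (i : ℕ) (s x : ℤ) : Sym2 (ℤ × ℤ) :=
  s((x, stripY i s x), (x + 1, stripY i s (x + 1)))

lemma stripEdge_mem_HammockE (i l w : ℕ) (s x : ℤ)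
    (hs0 : 0 ≤ s) (hsw : s + 1 ≤ w) (hx0 : 0 ≤ x) (hxl : x + 1 ≤ l) :
    stripEdge i s x ∈ HammockE i l w := by
  have h1 := stripY_bounds i s x
  have h2 := stripY_bounds i s (x + 1)
  constructor
  · refine ⟨(x, stripY i s x), (x + 1, stripY i s (x + 1)), rfl,
      ⟨hx0, by omega, by omega, by omega⟩, ⟨by omega, hxl, by omega, by omega⟩, ?_, ?_⟩
    · simp
    · rcases stripY_cases i s x with ⟨ha, hb⟩ | ⟨ha, hb⟩ <;> simp [ha, hb]
  · intro p hp
    rw [stripEdge, Sym2.mem_iff] at hp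
    rcases hp with rfl | rfl <;> exact stripY_par ..

lemma mem_hammockEFinset (i l w : ℕ) (e : Sym2 (ℤ × ℤ)) :
    e ∈ hammockEFinset i l w ↔ e ∈ HammockE i l w := by
  rw [hammockEFinset, Finset.mem_filter]
  constructor
  · exact fun h => h.2
  · intro h
    refine ⟨?_, h⟩
    obtain ⟨a, b, rfl, ha, hb, _, _⟩ := h.1
    rw [Finset.mk_mem_sym2_iff]
    constructor <;> simp [Finset.mem_product, Finset.mem_Icc] <;>
      first
      | exact ⟨⟨ha.1, ha.2.1⟩, ha.2.2.1, ha.2.2.2⟩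
      | exact ⟨⟨hb.1, hb.2.1⟩, hb.2.2.1, hb.2.2.2⟩

lemma stripEdge_mem_finset (i l w : ℕ) (s x : ℤ)
    (hs0 : 0 ≤ s) (hsw : s + 1 ≤ w) (hx0 : 0 ≤ x) (hxl : x + 1 ≤ l) :
    stripEdge i s x ∈ hammockEFinset i l w :=
  (mem_hammockEFinset i l w _).2 (stripEdge_mem_HammockE i l w s x hs0 hsw hx0 hxl)

lemma stripY_eq_of_par (i : ℕ) (s x t : ℤ) (ht : t = s ∨ t = s + 1)
    (hp : HammockPar i (x, t)) : stripY i s x = t := by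
  rcases ht with rfl | rfl
  · unfold stripY; simp [hp]
  · unfold stripY
    have : ¬ HammockPar i (x, s) := fun h => ((hammockPar_succ_right i x s).1 hp) h
    simp [this]

lemma edge_is_stripEdge_aux (i l w : ℕ) (a b : ℤ × ℤ)
    (ha : a ∈ HammockVAll l w) (hb : b ∈ HammockVAll l w)
    (hab1 : b.1 = a.1 + 1) (hab2 : |a.2 - b.2| = 1)
    (hpa : HammockPar i a) (hpb : HammockPar i b) :
    ∃ x s : ℤ, 0 ≤ x ∧ x + 1 ≤ l ∧ 0 ≤ s ∧ s + 1 ≤ w ∧ s(a, b) = stripEdge i s x := by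
  obtain ⟨ha1, ha2, ha3, ha4⟩ := ha
  obtain ⟨hb1, hb2, hb3, hb4⟩ := hb
  have h2 : a.2 - b.2 = 1 ∨ a.2 - b.2 = -1 := abs_eq (by norm_num) |>.1 hab2
  refine ⟨a.1, min a.2 b.2, ha1, by omega, by omega, by omega, ?_⟩
  set s := min a.2 b.2 with hs
  have hpa' : HammockPar i (a.1, a.2) := hpa
  have hpb' : HammockPar i (b.1, b.2) := hpb
  have hya : stripY i s a.1 = a.2 :=
    stripY_eq_of_par i s a.1 a.2 (by omega) hpa'
  have hyb : stripY i s (a.1 + 1) = b.2 := by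
    apply stripY_eq_of_par i s (a.1 + 1) b.2 (by omega)
    rw [← hab1]; exact hpb'
  rw [stripEdge, hya, hyb]
  congr 1 <;> ext <;> simp [hab1]

lemma exists_stripEdge (i l w : ℕ) (e : Sym2 (ℤ × ℤ)) (he : e ∈ HammockE i l w) :
    ∃ x s : ℤ, 0 ≤ x ∧ x + 1 ≤ l ∧ 0 ≤ s ∧ s + 1 ≤ w ∧ e = stripEdge i s x := by
  obtain ⟨⟨a, b, rfl, ha, hb, h1, h2⟩, hpar⟩ := he
  have hpa : HammockPar i a := hpar a (by simp)
  have hpb : HammockPar i b := hpar b (by simp)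
  have h1' : a.1 - b.1 = 1 ∨ a.1 - b.1 = -1 := abs_eq (by norm_num) |>.1 h1
  rcases h1' with h | h
  · rw [Sym2.eq_swap]
    exact edge_is_stripEdge_aux i l w b a hb ha (by omega)
      (by rw [abs_sub_comm]; exact h2) hpb hpa
  · exact edge_is_stripEdge_aux i l w a b ha hb (by omega) h2 hpa hpb

lemma stripEdge_inj (i : ℕ) {s x s' x' : ℤ}
    (h : stripEdge i s x = stripEdge i s' x') : s = s' ∧ x = x' := by
  rw [stripEdge, stripEdge, Sym2.eq_iff] at h
  rcases h with ⟨h1, h2⟩ | ⟨h1, h2⟩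
  · have hx : x = x' := congrArg Prod.fst h1
    subst hx
    have hu : stripY i s x = stripY i s' x := congrArg Prod.snd h1
    have hv : stripY i s (x + 1) = stripY i s' (x + 1) := congrArg Prod.snd h2
    rcases stripY_cases i s x with ⟨c1, c2⟩ | ⟨c1, c2⟩ <;>
      rcases stripY_cases i s' x with ⟨d1, d2⟩ | ⟨d1, d2⟩ <;> omega
  · have e1 : x = x' + 1 := congrArg Prod.fst h1
    have e2 : x + 1 = x' := congrArg Prod.fst h2
    omega

/-- The zig-zag path of strip `s` starting at column `x0`, with `n` steps. -/
noncomputable def stripPath (i : ℕ) (s x0 : ℤ) : ℕ → List (ℤ × ℤ)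
  | 0 => [(x0, stripY i s x0)]
  | n + 1 => (x0, stripY i s x0) :: stripPath i s (x0 + 1) n

lemma stripPath_ne_nil (i : ℕ) (s x0 : ℤ) (n : ℕ) : stripPath i s x0 n ≠ [] := by
  cases n <;> simp [stripPath]

lemma stripPath_head (i : ℕ) (s x0 : ℤ) (n : ℕ) (h : stripPath i s x0 n ≠ []) :
    (stripPath i s x0 n).head h = (x0, stripY i s x0) := by
  cases n <;> rfl

lemma stripPath_getLast (i : ℕ) (s : ℤ) (n : ℕ) : ∀ (x0 : ℤ)
    (h : stripPath i s x0 n ≠ []),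
    (stripPath i s x0 n).getLast h = (x0 + n, stripY i s (x0 + n)) := by
  induction n with
  | zero => intro x0 h; simp [stripPath]
  | succ n ih =>
    intro x0 h
    have h' := stripPath_ne_nil i s (x0 + 1) n
    have e : (stripPath i s x0 (n + 1)).getLast h =
        (stripPath i s (x0 + 1) n).getLast h' := List.getLast_cons h'
    rw [e, ih (x0 + 1) h']
    congr 1 <;> push_cast <;> ring

lemma stripPath_fst_lb (i : ℕ) (s : ℤ) (n : ℕ) : ∀ (x0 : ℤ),
    ∀ p ∈ stripPath i s x0 n, x0 ≤ p.1 := by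
  induction n with
  | zero => intro x0 p hp; simp [stripPath] at hp; subst hp; simp
  | succ n ih =>
    intro x0 p hp
    rw [stripPath, List.mem_cons] at hp
    rcases hp with rfl | hp
    · simp
    · have := ih (x0 + 1) p hp; omega

lemma stripPath_nodup (i : ℕ) (s : ℤ) (n : ℕ) : ∀ (x0 : ℤ),
    (stripPath i s x0 n).Nodup := by
  induction n with
  | zero => intro x0; simp [stripPath]
  | succ n ih =>
    intro x0
    rw [stripPath, List.nodup_cons]
    refine ⟨fun hmem => ?_, ih (x0 + 1)⟩
    have := stripPath_fst_lb i s n (x0 + 1) _ hmem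
    simp at this

lemma stripPath_chain' (i : ℕ) (s : ℤ) (n : ℕ) : ∀ (x0 : ℤ),
    (stripPath i s x0 n).Chain' (fun a b => b - a ∈ XStep) := by
  induction n with
  | zero => intro x0; exact List.isChain_singleton _
  | succ n ih =>
    intro x0
    rw [stripPath]; unfold List.Chain'; rw [List.isChain_cons]
    refine ⟨fun y hy => ?_, ih (x0 + 1)⟩
    have hh : (stripPath i s (x0 + 1) n).head? =
        some (x0 + 1, stripY i s (x0 + 1)) := by
      rw [List.head?_eq_head (stripPath_ne_nil i s (x0 + 1) n),
        stripPath_head]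
    rw [hh, Option.mem_some_iff] at hy
    subst hy
    rcases stripY_cases i s x0 with ⟨c1, c2⟩ | ⟨c1, c2⟩ <;>
      · simp only [XStep, Prod.mk_sub_mk, c1, c2, Set.mem_insert_iff, Set.mem_singleton_iff,
          Prod.mk.injEq]
        norm_num

lemma xEdges_cons_cons (a b : ℤ × ℤ) (t : List (ℤ × ℤ)) :
    xEdges (a :: b :: t) = s(a, b) :: xEdges (b :: t) := by
  simp [xEdges]

lemma stripPath_xEdges (i : ℕ) (s : ℤ) (n : ℕ) : ∀ (x0 : ℤ),
    ∀ e ∈ xEdges (stripPath i s x0 n), ∃ k : ℕ, k < n ∧ e = stripEdge i s (x0 + k) := by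
  induction n with
  | zero => intro x0 e he; simp [stripPath, xEdges] at he
  | succ n ih =>
    intro x0 e he
    have hcons : stripPath i s (x0 + 1) n =
        (x0 + 1, stripY i s (x0 + 1)) :: (stripPath i s (x0 + 1) n).tail := by
      conv_lhs => rw [← List.cons_head_tail (stripPath_ne_nil i s (x0 + 1) n)]
      rw [stripPath_head]
    rw [show stripPath i s x0 (n + 1) = (x0, stripY i s x0) :: stripPath i s (x0 + 1) n
      from rfl, hcons, xEdges_cons_cons, ← hcons, List.mem_cons] at he
    rcases he with rfl | he
    · exact ⟨0, by omega, by simp [stripEdge]⟩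
    · obtain ⟨k, hk, hke⟩ := ih (x0 + 1) e he
      exact ⟨k + 1, by omega, by rw [hke]; congr 1; push_cast; ring⟩

lemma strip_pathset (i l w : ℕ) (hl : 0 < l) (s : ℤ) (hs0 : 0 ≤ s) (hsw : s + 1 ≤ (w : ℤ))
    (P : Set (Sym2 (ℤ × ℤ))) (hPE : P ⊆ HammockE i l w)
    (hP : ∀ x : ℤ, 0 ≤ x → x + 1 ≤ (l : ℤ) → stripEdge i s x ∈ P) :
    (hammock i l w).IsPathset P := by
  refine ⟨hPE, stripPath i s 0 l, stripPath_ne_nil i s 0 l,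
    ⟨stripPath_nodup i s l 0, stripPath_chain' i s l 0⟩, ?_, ?_, ?_⟩
  · rw [stripPath_head]
    have hb := stripY_bounds i s 0
    exact ⟨⟨⟨le_refl _, by show (0:ℤ) ≤ (l:ℤ); positivity,
      by show (0:ℤ) ≤ stripY i s 0; omega, by show stripY i s 0 ≤ (w:ℤ); omega⟩,
      stripY_par i s 0⟩, rfl⟩
  · rw [stripPath_getLast]
    have hb := stripY_bounds i s (0 + (l : ℤ))
    exact ⟨⟨⟨by show (0:ℤ) ≤ 0 + (l:ℤ); positivity, by show (0:ℤ) + (l:ℤ) ≤ (l:ℤ); omega,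
      by show (0:ℤ) ≤ stripY i s (0 + (l:ℤ)); omega,
      by show stripY i s (0 + (l:ℤ)) ≤ (w:ℤ); omega⟩, stripY_par i s _⟩,
      by show (0:ℤ) + (l:ℤ) = (l:ℤ); omega⟩
  · intro e he
    obtain ⟨k, hk, rfl⟩ := stripPath_xEdges i s l 0 e he
    exact hP _ (by positivity) (by push_cast; omega)

lemma hammockEFinset_card (i l w : ℕ) : (hammockEFinset i l w).card = l * w := by
  rw [show l * w = ((Finset.range l) ×ˢ (Finset.range w)).card by
    simp [Finset.card_product]]
  symm
  refine Finset.card_bij (fun q _ => stripEdge i (q.2 : ℤ) (q.1 : ℤ)) ?_ ?_ ?_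
  · rintro ⟨x, t⟩ hq
    simp only [Finset.mem_product, Finset.mem_range] at hq
    exact stripEdge_mem_finset i l w t x (by positivity) (by exact_mod_cast hq.2)
      (by positivity) (by exact_mod_cast hq.1)
  · rintro ⟨x, t⟩ h1 ⟨x', t'⟩ h2 heq
    obtain ⟨hs, hx⟩ := stripEdge_inj i heq
    have : x = x' := by exact_mod_cast hx
    have : t = t' := by exact_mod_cast hs
    simp_all
  · intro e he
    obtain ⟨x, t, hx0, hxl, ht0, htw, rfl⟩ :=
      exists_stripEdge i l w e ((mem_hammockEFinset i l w e).1 he)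
    refine ⟨(x.toNat, t.toNat), ?_, ?_⟩
    · simp only [Finset.mem_product, Finset.mem_range]
      omega
    · show stripEdge i ((t.toNat : ℤ)) ((x.toNat : ℤ)) = stripEdge i t x
      rw [Int.toNat_of_nonneg ht0, Int.toNat_of_nonneg hx0]

lemma card_of_not_pathset (i l w : ℕ) (hl : 0 < l) (P : Finset (Sym2 (ℤ × ℤ)))
    (hP : P ⊆ hammockEFinset i l w) (hnp : ¬ (hammock i l w).IsPathset ↑P) :
    P.card + w ≤ l * w := by
  classical
  have hPE : (↑P : Set (Sym2 (ℤ × ℤ))) ⊆ HammockE i l w := by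
    intro e he
    exact (mem_hammockEFinset i l w e).1 (hP he)
  have hex : ∀ t : ℕ, t < w → ∃ x : ℤ, 0 ≤ x ∧ x + 1 ≤ (l : ℤ) ∧
      stripEdge i (t : ℤ) x ∉ (↑P : Set (Sym2 (ℤ × ℤ))) := by
    intro t ht
    by_contra hcon
    push_neg at hcon
    exact hnp (strip_pathset i l w hl t (by positivity) (by exact_mod_cast ht) ↑P hPE
      (fun x hx1 hx2 => hcon x hx1 hx2))
  set f : ℕ → Sym2 (ℤ × ℤ) := fun t =>
    if h : t < w then stripEdge i (t : ℤ) (Classical.choose (hex t h))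
    else s(((0 : ℤ), (0 : ℤ)), ((0 : ℤ), (0 : ℤ))) with hf
  have hmaps : ∀ t ∈ Finset.range w, f t ∈ hammockEFinset i l w \ P := by
    intro t ht
    rw [Finset.mem_range] at ht
    obtain ⟨h1, h2, h3⟩ := Classical.choose_spec (hex t ht)
    rw [Finset.mem_sdiff]
    refine ⟨?_, ?_⟩
    · rw [hf]; simp only [dif_pos ht]
      exact stripEdge_mem_finset i l w t _ (by positivity) (by exact_mod_cast ht) h1 h2
    · rw [hf]; simp only [dif_pos ht]
      exact fun hmem => h3 (Finset.mem_coe.2 hmem)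
  have hinj : Set.InjOn f ↑(Finset.range w) := by
    intro t ht t' ht' heq
    rw [Finset.coe_range, Set.mem_Iio] at ht ht'
    rw [hf] at heq
    simp only [dif_pos ht, dif_pos ht'] at heq
    exact_mod_cast (stripEdge_inj i heq).1
  have hle := Finset.card_le_card_of_injOn f hmaps hinj
  rw [Finset.card_range, Finset.card_sdiff_of_subset hP, hammockEFinset_card] at hle
  have := Finset.card_le_card hP
  rw [hammockEFinset_card] at this
  omega

open Polynomial in
/-- The reliability polynomial as an actual polynomial. -/
noncomputable def hammockPoly (i l w : ℕ) : ℝ[X] :=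
  ∑ P ∈ (hammockEFinset i l w).powerset.filter
      (fun P : Finset (Sym2 (ℤ × ℤ)) => (hammock i l w).IsPathset ↑P),
    X ^ P.card * (1 - X) ^ (l * w - P.card)

open Polynomial in
lemma hammockRel_eq_eval (i l w : ℕ) :
    hammockRel i l w = fun p => (hammockPoly i l w).eval p := by
  funext p
  rw [hammockRel, hammockPoly, Polynomial.eval_finset_sum]
  exact Finset.sum_congr rfl fun P _ => by simp

open Polynomial in
lemma iterDeriv_sub (k : ℕ) (a b : ℝ[X]) :
    derivative^[k] (a - b) = derivative^[k] a - derivative^[k] b := by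
  induction k generalizing a b with
  | zero => rfl
  | succ k ih =>
    rw [Function.iterate_succ_apply, Function.iterate_succ_apply,
      Function.iterate_succ_apply, derivative_sub, ih]

open Polynomial in
lemma iterDeriv_one (k : ℕ) (hk : 1 ≤ k) : (derivative^[k] (1 : ℝ[X])) = 0 := by
  obtain ⟨k', rfl⟩ : ∃ k', k = k' + 1 := ⟨k - 1, by omega⟩
  rw [Function.iterate_succ_apply, derivative_one]
  exact Function.iterate_fixed derivative_zero k'

open Polynomial in
lemma key_vanish : ∀ (k : ℕ) (wn : ℕ) (q : ℝ[X]), k < wn →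
    (derivative^[k] ((1 - X) ^ wn * q)).eval 1 = 0 := by
  intro k
  induction k with
  | zero =>
    intro wn q h
    simp only [Function.iterate_zero, id_eq, eval_mul, eval_pow, eval_sub, eval_one, eval_X]
    rw [sub_self, zero_pow (by omega), zero_mul]
  | succ k ih =>
    intro wn q h
    obtain ⟨w', rfl⟩ : ∃ w', wn = w' + 1 := ⟨wn - 1, by omega⟩
    rw [Function.iterate_succ_apply]
    have hder : derivative ((1 - X : ℝ[X]) ^ (w' + 1) * q) =
        (1 - X) ^ w' * (-(C ((w' + 1 : ℕ) : ℝ)) * q + (1 - X) * derivative q) := by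
      rw [derivative_mul, derivative_pow]
      simp only [derivative_sub, derivative_one, derivative_X, zero_sub, Nat.add_sub_cancel]
      ring
    rw [hder]
    exact ih w' _ (by omega)

open Polynomial in
lemma iteratedDeriv_polyEval (k : ℕ) : ∀ (q : ℝ[X]),
    iteratedDeriv k (fun x : ℝ => q.eval x) = fun x => (derivative^[k] q).eval x := by
  induction k with
  | zero => intro q; rw [iteratedDeriv_zero]; rfl
  | succ k ih =>
    intro q
    rw [iteratedDeriv_succ', Function.iterate_succ_apply]
    have hd : deriv (fun x : ℝ => q.eval x) = fun x => (derivative q).eval x := by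
      funext x; exact Polynomial.deriv q
    rw [hd, ih]

open Polynomial in
lemma hammockPoly_eq (i l w : ℕ) (hl : 0 < l) :
    ∃ R : ℝ[X], hammockPoly i l w = 1 - (1 - X) ^ w * R := by
  classical
  have hcard : (hammockEFinset i l w).card = l * w := hammockEFinset_card i l w
  refine ⟨∑ P ∈ (hammockEFinset i l w).powerset.filter
      (fun P : Finset (Sym2 (ℤ × ℤ)) => ¬ (hammock i l w).IsPathset ↑P),
      X ^ P.card * (1 - X) ^ (l * w - P.card - w), ?_⟩
  have hbin : ∑ P ∈ (hammockEFinset i l w).powerset,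
      (X ^ P.card * (1 - X) ^ (l * w - P.card) : ℝ[X]) = 1 := by
    rw [Finset.sum_powerset]
    calc ∑ j ∈ Finset.range ((hammockEFinset i l w).card + 1),
          ∑ P ∈ Finset.powersetCard j (hammockEFinset i l w),
            (X ^ P.card * (1 - X) ^ (l * w - P.card) : ℝ[X])
        = ∑ j ∈ Finset.range (l * w + 1),
            (X ^ j * (1 - X) ^ (l * w - j) : ℝ[X]) * (((l * w).choose j : ℝ[X])) := by
          rw [hcard]
          refine Finset.sum_congr rfl fun j hj => ?_
          rw [Finset.sum_congr rfl (fun P hP => by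
              rw [(Finset.mem_powersetCard.1 hP).2]),
            Finset.sum_const, Finset.card_powersetCard, hcard, nsmul_eq_mul]
          ring
      _ = (X + (1 - X) : ℝ[X]) ^ (l * w) := by rw [add_pow]
      _ = 1 := by rw [show (X + (1 - X) : ℝ[X]) = 1 by ring, one_pow]
  have hsplit := Finset.sum_filter_add_sum_filter_not (hammockEFinset i l w).powerset
    (fun P : Finset (Sym2 (ℤ × ℤ)) => (hammock i l w).IsPathset ↑P)
    (fun P => (X ^ P.card * (1 - X) ^ (l * w - P.card) : ℝ[X]))
  rw [hbin] at hsplit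
  have hNR : (∑ P ∈ (hammockEFinset i l w).powerset.filter
        (fun P : Finset (Sym2 (ℤ × ℤ)) => ¬ (hammock i l w).IsPathset ↑P),
        (X ^ P.card * (1 - X) ^ (l * w - P.card) : ℝ[X]))
      = (1 - X) ^ w * ∑ P ∈ (hammockEFinset i l w).powerset.filter
        (fun P : Finset (Sym2 (ℤ × ℤ)) => ¬ (hammock i l w).IsPathset ↑P),
        X ^ P.card * (1 - X) ^ (l * w - P.card - w) := by
    rw [Finset.mul_sum]
    refine Finset.sum_congr rfl fun P hP => ?_
    rw [Finset.mem_filter] at hP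
    have hle : P.card + w ≤ l * w :=
      card_of_not_pathset i l w hl P (Finset.mem_powerset.1 hP.1) hP.2
    have hpow : (1 - X : ℝ[X]) ^ (l * w - P.card)
        = (1 - X) ^ w * (1 - X) ^ (l * w - P.card - w) := by
      rw [← pow_add]; congr 1; omega
    rw [hpow]; ring
  rw [hammockPoly, ← hNR, eq_sub_iff_add_eq]
  exact hsplit

/-- h(1) = 1, and the k-th derivative of h = h^{(i)}_{l,w} vanishes at 1
for every k = 1, 2, …, w−1. -/
theorem hammockRel_iteratedDeriv_one (l w : ℕ) (hl : 0 < l) (hw : 0 < w)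
    (i : ℕ) (hi : i = 1 ∨ i = 2) :
    hammockRel i l w 1 = 1 ∧
      ∀ k : ℕ, 1 ≤ k → k < w → iteratedDeriv k (hammockRel i l w) 1 = 0 := by
  obtain ⟨R, hR⟩ := hammockPoly_eq i l w hl
  have hfun := hammockRel_eq_eval i l w
  constructor
  · rw [hfun]
    show (hammockPoly i l w).eval 1 = 1
    rw [hR]
    simp [Polynomial.eval_pow, zero_pow hw.ne']
  · intro k hk1 hkw
    rw [hfun, iteratedDeriv_polyEval]
    show (Polynomial.derivative^[k] (hammockPoly i l w)).eval 1 = 0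
    rw [hR, iterDeriv_sub, iterDeriv_one k hk1, zero_sub, Polynomial.eval_neg,
      key_vanish k w R hkw, neg_zero]
end

section
/- Let l, w be positive integers and i ∈ {1,2}. Every cutset of the hammock network H^{(i)}_{l,w} contains at least w edges. -/
open scoped Classical

/- ===== auxiliary material ===== -/

lemma xEdges_map_range (f : ℕ → ℤ × ℤ) (n : ℕ) :
    xEdges ((List.range (n+1)).map f) = (List.range n).map (fun j => s(f j, f (j+1))) := by
  apply List.ext_getElem
  · simp [xEdges]
  · intro j h1 h2
    simp [xEdges, List.getElem_zip, List.getElem_tail]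

/-- the zigzag vertex function: row band k, column j. -/
def hamF (ε : ℤ) (k j : ℕ) : ℤ × ℤ := ((j : ℤ), (k : ℤ) + ((j : ℤ) + k + ε) % 2)

/-- Every cutset of the hammock network H^{(i)}_{l,w} contains at
least w edges. -/
theorem cutset_card_ge (l w : ℕ) (hl : 0 < l) (hw : 0 < w)
    (i : ℕ) (hi : i = 1 ∨ i = 2) (C : Set (Sym2 (ℤ × ℤ)))
    (hC : (hammock i l w).IsCutset C) :
    w ≤ C.ncard := by
  classical
  obtain ⟨hCsub, hncut⟩ := hC
  -- finiteness of C
  have hV : (HammockVAll l w).Finite := by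
    have hsub : HammockVAll l w ⊆ (Set.Icc 0 (l:ℤ)) ×ˢ (Set.Icc 0 (w:ℤ)) :=
      fun p hp => ⟨⟨hp.1, hp.2.1⟩, ⟨hp.2.2.1, hp.2.2.2⟩⟩
    exact ((Set.finite_Icc _ _).prod (Set.finite_Icc _ _)).subset hsub
  have hEfin : (HammockEAll l w).Finite := by
    have hsub : HammockEAll l w ⊆ (fun p : (ℤ × ℤ) × (ℤ × ℤ) => s(p.1, p.2)) '' ((HammockVAll l w) ×ˢ (HammockVAll l w)) := by
      rintro e ⟨a, b, rfl, ha, hb, -, -⟩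
      exact ⟨(a, b), ⟨ha, hb⟩, rfl⟩
    exact ((hV.prod hV).image _).subset hsub
  have hCfin : C.Finite := hEfin.subset (fun e he => (hCsub he).1)
  -- parity setup
  set ε : ℤ := if i = 1 then 0 else 1 with hεdef
  have hpar : ∀ p : ℤ × ℤ, HammockPar i p ↔ (p.1 + p.2) % 2 = ε % 2 := by
    intro p
    rcases hi with h | h <;> subst h <;>
      simp [HammockPar, hεdef, Int.even_iff, Int.odd_iff]
  -- vertex parity and bounds
  have hvert : ∀ k j : ℕ, k < w → j ≤ l → hamF ε k j ∈ HammockV i l w := by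
    intro k j hk hj
    refine ⟨⟨?_, ?_, ?_, ?_⟩, ?_⟩
    · simp only [hamF]; exact_mod_cast Nat.zero_le j
    · simp only [hamF]; exact_mod_cast hj
    · simp only [hamF]; omega
    · simp only [hamF]
      have : ((j : ℤ) + k + ε) % 2 ≤ 1 := by omega
      have hk' : (k : ℤ) < w := by exact_mod_cast hk
      omega
    · rw [hpar]; simp only [hamF]; omega
  -- edges of path k are in the hammock edge set
  have hedge : ∀ k j : ℕ, k < w → j < l →
      s(hamF ε k j, hamF ε k (j+1)) ∈ HammockE i l w := by
    intro k j hk hj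
    constructor
    · refine ⟨hamF ε k j, hamF ε k (j+1), rfl, (hvert k j hk (by omega)).1,
        (hvert k (j+1) hk (by omega)).1, ?_, ?_⟩
      · simp only [hamF]; push_cast
        rw [abs_eq (by norm_num : (0:ℤ) ≤ 1)]; omega
      · simp only [hamF]; push_cast
        rw [abs_eq (by norm_num : (0:ℤ) ≤ 1)]; omega
    · intro p hp
      rw [Sym2.mem_iff] at hp
      rcases hp with rfl | rfl
      · exact (hvert k j hk (by omega)).2
      · exact (hvert k (j+1) hk (by omega)).2
  -- each band's path forces an edge of C
  have hpath : ∀ k : Fin w, ∃ e, e ∈ C ∧ ∃ j : ℕ, j < l ∧ e = s(hamF ε k j, hamF ε k (j+1)) := by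
    intro ⟨k, hk⟩
    by_contra hcon
    push_neg at hcon
    apply hncut
    set vs : List (ℤ × ℤ) := (List.range (l+1)).map (hamF ε k) with hvs
    have hne : vs ≠ [] := by simp [hvs]
    have hmemE : ∀ e ∈ xEdges vs, e ∈ (hammock i l w).edges \ C := by
      intro e he
      rw [hvs, xEdges_map_range] at he
      simp only [List.mem_map, List.mem_range] at he
      obtain ⟨j, hj, rfl⟩ := he
      exact ⟨hedge k j hk hj, fun hmem => hcon _ hmem j hj rfl⟩
    refine ⟨Set.diff_subset, vs, hne, ⟨?_, ?_⟩, ?_, ?_, hmemE⟩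
    · -- Nodup
      refine List.Nodup.map ?_ List.nodup_range
      intro a b hab
      have := congrArg Prod.fst hab
      simpa [hamF] using this
    · -- Chain'
      rw [hvs, List.Chain', List.isChain_map, List.isChain_range_succ]
      intro m hm
      have h1 : hamF ε k (m+1) - hamF ε k m =
          (1, ((m:ℤ) + 1 + k + ε) % 2 - ((m:ℤ) + k + ε) % 2) := by
        simp only [hamF, Prod.mk_sub_mk, Prod.mk.injEq]
        refine ⟨by push_cast; ring, by push_cast; ring⟩
      rw [h1]
      have h2 : ((m:ℤ) + 1 + k + ε) % 2 - ((m:ℤ) + k + ε) % 2 = 1 ∨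
          ((m:ℤ) + 1 + k + ε) % 2 - ((m:ℤ) + k + ε) % 2 = -1 := by omega
      rcases h2 with h2 | h2 <;> rw [h2] <;> simp [XStep]
    · -- head ∈ src
      have : vs.head hne = hamF ε k 0 := by
        rw [List.head_eq_getElem]; simp [hvs]
      rw [this]
      exact ⟨hvert k 0 hk (by omega), rfl⟩
    · -- getLast ∈ tgt
      have : vs.getLast hne = hamF ε k l := by
        rw [List.getLast_eq_getElem]; simp [hvs]
      rw [this]
      exact ⟨hvert k l hk le_rfl, by simp [hamF]⟩
  choose e heC hj using hpath
  -- injectivity of e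
  have hinj : Function.Injective e := by
    intro k k' hkk
    obtain ⟨j, hjl, hje⟩ := hj k
    obtain ⟨j', hjl', hje'⟩ := hj k'
    rw [hkk, hje'] at hje
    rw [Sym2.eq_iff] at hje
    have hky : ∀ a a' : ℕ, hamF ε k' a = hamF ε k a' →
        (a : ℤ) = a' ∧ (k':ℤ) + ((a:ℤ) + k' + ε) % 2 = (k:ℤ) + ((a:ℤ) + k + ε) % 2 := by
      intro a a' h
      have h1 := congrArg Prod.fst h
      have h2 := congrArg Prod.snd h
      simp only [hamF] at h1 h2
      exact ⟨h1, by rw [h1] at h2 ⊢; exact h2⟩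
    have hfin : (k : ℤ) = (k' : ℤ) := by
      rcases hje with ⟨h1, h2⟩ | ⟨h1, h2⟩
      · obtain ⟨hx1, hy1⟩ := hky _ _ h1
        obtain ⟨hx2, hy2⟩ := hky _ _ h2
        push_cast at hx1 hx2 hy1 hy2
        omega
      · obtain ⟨hx1, hy1⟩ := hky _ _ h1
        obtain ⟨hx2, hy2⟩ := hky _ _ h2
        push_cast at hx1 hx2 hy1 hy2
        omega
    exact Fin.ext (by exact_mod_cast hfin)
  -- conclude
  have hsub : ↑(Finset.univ.image e) ⊆ C := by
    intro x hx
    simp only [Finset.coe_image, Set.mem_image, Finset.coe_univ, Set.image_univ,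
      Set.mem_range] at hx
    obtain ⟨k, rfl⟩ := hx
    exact heC k
  calc w = (Finset.univ.image e).card := by
        rw [Finset.card_image_of_injective _ hinj, Finset.card_univ, Fintype.card_fin]
    _ = (↑(Finset.univ.image e) : Set (Sym2 (ℤ × ℤ))).ncard := (Set.ncard_coe_finset _).symm
    _ ≤ C.ncard := Set.ncard_le_ncard hsub hCfin
end
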